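/- Let L(w) = ∑_n exp(-⟨w,x_n⟩) with ‖x_n‖_* ≤ B for all n, and consider steepest descent iterates w_{t+1} = w_t + η_t Δw_t where ⟨Δw_t, -∇L(w_t)⟩ = ‖Δw_t‖² = ‖∇L(w_t)‖_*², with step sizes 0 < η_t ≤ 1/(B² L(w_t)) and assuming L(w_t) is strictly decreasing. Then ∑_{t=0}^∞ η_t ‖∇L(w_t)‖_*² < ∞; in particular it is bounded by 2 L(w_0). -/

import Mathlib

open Filter Topology Finset
open scoped RealInnerProductSpace BigOperators

noncomputable section

abbrev Euc (d : ℕ) := EuclideanSpace ℝ (Fin d)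

/-- `N` is a norm on `ℝ^d`. -/
def IsNorm {d : ℕ} (N : Euc d → ℝ) : Prop :=
  (∀ v, N v = 0 ↔ v = 0) ∧ (∀ (c : ℝ) (v), N (c • v) = |c| * N v) ∧
  (∀ v w, N (v + w) ≤ N v + N w)

/-- Dual norm `‖y‖_* = sup_{‖v‖ ≤ 1} ⟨y, v⟩`. -/
def dualNorm {d : ℕ} (N : Euc d → ℝ) (y : Euc d) : ℝ :=
  sSup {s | ∃ v, N v ≤ 1 ∧ s = ⟪y, v⟫}

/-- Exponential-loss empirical objective `L(w) = ∑ n exp(-⟨w, x_n⟩)`. -/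
def expLoss {d N : ℕ} (x : Fin N → Euc d) (u : Euc d) : ℝ :=
  ∑ n, Real.exp (-⟪u, x n⟫)

/-- Negative gradient of the exponential loss: `-∇L(w) = ∑ n exp(-⟨w,x_n⟩) x_n`. -/
def negGrad {d N : ℕ} (x : Fin N → Euc d) (u : Euc d) : Euc d :=
  ∑ n, Real.exp (-⟪u, x n⟫) • x n
namespace SDaux

variable {d : ℕ} {Nrm : Euc d → ℝ}

lemma nrm_zero (h : IsNorm Nrm) : Nrm 0 = 0 := (h.1 0).2 rfl

lemma nrm_neg (h : IsNorm Nrm) (v : Euc d) : Nrm (-v) = Nrm v := by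
  have h1 := h.2.1 (-1) v
  simpa using h1

lemma nrm_nonneg (h : IsNorm Nrm) (v : Euc d) : 0 ≤ Nrm v := by
  have h1 := h.2.2 v (-v)
  rw [add_neg_cancel, nrm_zero h, nrm_neg h] at h1
  linarith

lemma nrm_sum_le (h : IsNorm Nrm) {α : Type*} (s : Finset α) (f : α → Euc d) :
    Nrm (∑ i ∈ s, f i) ≤ ∑ i ∈ s, Nrm (f i) := by
  classical
  induction s using Finset.induction with
  | empty => simp [nrm_zero h]
  | insert _ _ hx ih =>
      rw [Finset.sum_insert hx, Finset.sum_insert hx]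
      exact le_trans (h.2.2 _ _) (by linarith)

lemma nrm_upper (h : IsNorm Nrm) : ∃ C : ℝ, 0 ≤ C ∧ ∀ v, Nrm v ≤ C * ‖v‖ := by
  refine ⟨∑ i : Fin d, Nrm (EuclideanSpace.single i (1:ℝ)),
    Finset.sum_nonneg fun i _ => nrm_nonneg h _, fun v => ?_⟩
  have hv : v = ∑ i : Fin d, v i • EuclideanSpace.single i (1:ℝ) := by
    have hb := (EuclideanSpace.basisFun (Fin d) ℝ).toBasis.sum_repr v
    simp only [EuclideanSpace.basisFun_repr, OrthonormalBasis.coe_toBasis,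
      EuclideanSpace.basisFun_apply] at hb
    exact hb.symm
  have habs : ∀ i : Fin d, |v i| ≤ ‖v‖ := by
    intro i
    have h1 := abs_real_inner_le_norm (EuclideanSpace.single i (1:ℝ)) v
    rw [EuclideanSpace.inner_single_left, EuclideanSpace.norm_single] at h1
    simpa using h1
  calc Nrm v = Nrm (∑ i : Fin d, v i • EuclideanSpace.single i (1:ℝ)) := by rw [← hv]
    _ ≤ ∑ i : Fin d, Nrm (v i • EuclideanSpace.single i (1:ℝ)) := nrm_sum_le h _ _
    _ = ∑ i : Fin d, |v i| * Nrm (EuclideanSpace.single i (1:ℝ)) := by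
        simp [h.2.1]
    _ ≤ ∑ i : Fin d, ‖v‖ * Nrm (EuclideanSpace.single i (1:ℝ)) := by
        refine Finset.sum_le_sum fun i _ => ?_
        exact mul_le_mul_of_nonneg_right (habs i) (nrm_nonneg h _)
    _ = (∑ i : Fin d, Nrm (EuclideanSpace.single i (1:ℝ))) * ‖v‖ := by
        rw [← Finset.mul_sum]; ring

lemma nrm_continuous (h : IsNorm Nrm) : Continuous Nrm := by
  obtain ⟨C, hC0, hC⟩ := nrm_upper h
  have : LipschitzWith (Real.toNNReal C) Nrm := by
    apply LipschitzWith.of_dist_le_mul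
    intro u v
    have h1 : Nrm u - Nrm v ≤ Nrm (u - v) := by
      have := h.2.2 (u - v) v
      rw [sub_add_cancel] at this
      linarith
    have h2 : Nrm v - Nrm u ≤ Nrm (u - v) := by
      have := h.2.2 (v - u) u
      rw [sub_add_cancel] at this
      have h3 : Nrm (v - u) = Nrm (u - v) := by rw [← neg_sub u v, nrm_neg h]
      linarith
    rw [Real.dist_eq, Real.coe_toNNReal _ hC0, dist_eq_norm]
    have h4 : |Nrm u - Nrm v| ≤ Nrm (u - v) := abs_sub_le_iff.2 ⟨h1, h2⟩
    exact le_trans h4 (hC _)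
  exact this.continuous

lemma nrm_lower (h : IsNorm Nrm) : ∃ c : ℝ, 0 < c ∧ ∀ v, ‖v‖ ≤ c * Nrm v := by
  by_cases hsp : (Metric.sphere (0 : Euc d) 1).Nonempty
  · obtain ⟨a, ha, hmin'⟩ := (isCompact_sphere (0 : Euc d) 1).exists_isMinOn hsp
      (nrm_continuous h).continuousOn
    have hmin : ∀ b ∈ Metric.sphere (0 : Euc d) 1, Nrm a ≤ Nrm b := fun b hb =>
      isMinOn_iff.1 hmin' b hb
    have ha1 : ‖a‖ = 1 := by simpa using ha
    have hane : a ≠ 0 := by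
      intro h0; rw [h0, norm_zero] at ha1; norm_num at ha1
    have hm : 0 < Nrm a :=
      lt_of_le_of_ne (nrm_nonneg h a) (fun h0 => hane ((h.1 a).1 h0.symm))
    refine ⟨(Nrm a)⁻¹, inv_pos.2 hm, fun v => ?_⟩
    rcases eq_or_ne v 0 with rfl | hv
    · simp [nrm_zero h]
    · have hnv : 0 < ‖v‖ := norm_pos_iff.2 hv
      have hu : (‖v‖⁻¹ • v) ∈ Metric.sphere (0 : Euc d) 1 := by
        simp [norm_smul, abs_of_pos (inv_pos.2 hnv), inv_mul_cancel₀ hnv.ne']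
      have h5 := hmin _ hu
      rw [h.2.1, abs_of_pos (inv_pos.2 hnv)] at h5
      rw [← sub_nonneg]
      have : (Nrm a)⁻¹ * Nrm v - ‖v‖ = ‖v‖ * (Nrm a)⁻¹ * (‖v‖⁻¹ * Nrm v - Nrm a) := by
        field_simp
      rw [this]
      exact mul_nonneg (mul_nonneg hnv.le (inv_pos.2 hm).le) (sub_nonneg.2 h5)
  · refine ⟨1, one_pos, fun v => ?_⟩
    rcases eq_or_ne v 0 with rfl | hv
    · simp [nrm_zero h]
    · exact absurd ⟨‖v‖⁻¹ • v, by
        simp [norm_smul, abs_of_pos (inv_pos.2 (norm_pos_iff.2 hv)),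
          inv_mul_cancel₀ (norm_pos_iff.2 hv).ne']⟩ hsp

end SDaux

namespace SDaux
variable {d : ℕ} {Nrm : Euc d → ℝ}

lemma mem_dual_set (h : IsNorm Nrm) (y : Euc d) :
    (0:ℝ) ∈ {s | ∃ v, Nrm v ≤ 1 ∧ s = ⟪y, v⟫} :=
  ⟨0, by rw [nrm_zero h]; norm_num, by simp⟩

lemma bddAbove_dual (h : IsNorm Nrm) {c : ℝ} (hc : 0 ≤ c) (hcl : ∀ v, ‖v‖ ≤ c * Nrm v) (y : Euc d) :
    BddAbove {s | ∃ v, Nrm v ≤ 1 ∧ s = ⟪y, v⟫} := by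
  refine ⟨‖y‖ * c, ?_⟩
  rintro s ⟨v, hv, rfl⟩
  calc ⟪y, v⟫ ≤ ‖y‖ * ‖v‖ := real_inner_le_norm y v
    _ ≤ ‖y‖ * (c * Nrm v) := mul_le_mul_of_nonneg_left (hcl v) (norm_nonneg y)
    _ ≤ ‖y‖ * c := by
        have h2 : c * Nrm v ≤ c * 1 := mul_le_mul_of_nonneg_left hv hc
        nlinarith [norm_nonneg y]

lemma dualNorm_nonneg (h : IsNorm Nrm) {c : ℝ} (hc : 0 ≤ c) (hcl : ∀ v, ‖v‖ ≤ c * Nrm v) (y : Euc d) :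
    0 ≤ dualNorm Nrm y :=
  le_csSup (bddAbove_dual h hc hcl y) (mem_dual_set h y)

lemma dualNorm_le (h : IsNorm Nrm) (y : Euc d) {M : ℝ}
    (hM : ∀ v, Nrm v ≤ 1 → ⟪y, v⟫ ≤ M) : dualNorm Nrm y ≤ M := by
  apply Real.sSup_le
  · rintro s ⟨v, hv, rfl⟩; exact hM v hv
  · have := hM 0 (by rw [nrm_zero h]; norm_num)
    simpa using this

lemma inner_le_dualNorm (h : IsNorm Nrm) {c : ℝ} (hc : 0 ≤ c) (hcl : ∀ v, ‖v‖ ≤ c * Nrm v)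
    (y v : Euc d) : ⟪y, v⟫ ≤ dualNorm Nrm y * Nrm v := by
  rcases eq_or_lt_of_le (nrm_nonneg h v) with h0 | h0
  · have hv0 : v = 0 := (h.1 v).1 h0.symm
    simp [hv0, nrm_zero h]
  · have hmem : ⟪y, (Nrm v)⁻¹ • v⟫ ∈ {s | ∃ u, Nrm u ≤ 1 ∧ s = ⟪y, u⟫} := by
      refine ⟨(Nrm v)⁻¹ • v, ?_, rfl⟩
      rw [h.2.1, abs_of_pos (inv_pos.2 h0), inv_mul_cancel₀ h0.ne']
    have h1 := le_csSup (bddAbove_dual h hc hcl y) hmem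
    rw [real_inner_smul_right] at h1
    have h2 : ⟪y, v⟫ = ((Nrm v)⁻¹ * ⟪y, v⟫) * Nrm v := by
      field_simp
    rw [h2]
    exact mul_le_mul_of_nonneg_right h1 h0.le

lemma abs_inner_le_dualNorm (h : IsNorm Nrm) {c : ℝ} (hc : 0 ≤ c) (hcl : ∀ v, ‖v‖ ≤ c * Nrm v)
    (y v : Euc d) : |⟪y, v⟫| ≤ dualNorm Nrm y * Nrm v := by
  have h1 := inner_le_dualNorm h hc hcl y v
  have h2 := inner_le_dualNorm h hc hcl y (-v)
  rw [inner_neg_right, nrm_neg h] at h2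
  exact abs_le.2 ⟨by linarith, h1⟩

end SDaux

/-- for steepest descent on the exponential loss with step sizes
`0 < η_t ≤ 1/(B² L(w_t))` and strictly decreasing loss,
`∑_t η_t ‖∇L(w_t)‖_*² < ∞`, bounded by `2 L(w₀)`. -/
theorem steepest_descent_summable {d N : ℕ} (Nrm : Euc d → ℝ) (hNrm : IsNorm Nrm)
    (x : Fin N → Euc d) (B : ℝ) (hB : ∀ n, dualNorm Nrm (x n) ≤ B)
    (w Δ : ℕ → Euc d) (η : ℕ → ℝ)
    (hupd : ∀ t, w (t + 1) = w t + η t • Δ t)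
    (hdir1 : ∀ t, ⟪Δ t, negGrad x (w t)⟫ = (Nrm (Δ t)) ^ 2)
    (hdir2 : ∀ t, (Nrm (Δ t)) ^ 2 = (dualNorm Nrm (-(negGrad x (w t)))) ^ 2)
    (hη : ∀ t, 0 < η t ∧ η t ≤ 1 / (B ^ 2 * expLoss x (w t)))
    (hdec : StrictAnti fun t => expLoss x (w t)) :
    Summable (fun t => η t * (dualNorm Nrm (-(negGrad x (w t)))) ^ 2) ∧
      ∑' t, η t * (dualNorm Nrm (-(negGrad x (w t)))) ^ 2 ≤ 2 * expLoss x (w 0) := by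
  classical
  obtain ⟨c, hc, hcl⟩ := SDaux.nrm_lower hNrm
  have hNpos : 0 < N := by
    rcases Nat.eq_zero_or_pos N with h0 | h0
    · exfalso
      have h1 := hdec (show (0:ℕ) < 1 by norm_num)
      subst h0
      simp [expLoss] at h1
    · exact h0
  have hne : Nonempty (Fin N) := ⟨⟨0, hNpos⟩⟩
  have hLpos : ∀ u, 0 < expLoss x u :=
    fun u => Finset.sum_pos (fun n _ => Real.exp_pos _) Finset.univ_nonempty
  have hBpos : 0 < B := by
    have hBnn : 0 ≤ B :=
      le_trans (SDaux.dualNorm_nonneg hNrm hc.le hcl (x ⟨0, hNpos⟩)) (hB ⟨0, hNpos⟩)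
    rcases eq_or_lt_of_le hBnn with h0 | h0
    · exfalso
      have h1 := (hη 0).2
      rw [← h0] at h1
      norm_num at h1
      linarith [(hη 0).1]
    · exact h0
  have key : ∀ t, η t * (dualNorm Nrm (-(negGrad x (w t)))) ^ 2 ≤
      2 * (expLoss x (w t) - expLoss x (w (t + 1))) := by
    intro t
    rw [← hdir2 t]
    obtain ⟨hηpos, hηle⟩ := hη t
    set g : ℝ := Nrm (Δ t) with hg
    have hgnn : 0 ≤ g := SDaux.nrm_nonneg hNrm _
    set Lt : ℝ := expLoss x (w t) with hLt
    have hLtpos : 0 < Lt := hLpos (w t)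
    set ℓ : Fin N → ℝ := fun n => Real.exp (-⟪w t, x n⟫) with hℓ
    set cf : Fin N → ℝ := fun n => ⟪Δ t, x n⟫ with hcf
    have hlpos : ∀ n, 0 < ℓ n := fun n => Real.exp_pos _
    have hcB : ∀ n, |cf n| ≤ B * g := by
      intro n
      have h1 : |⟪x n, Δ t⟫| ≤ dualNorm Nrm (x n) * Nrm (Δ t) :=
        SDaux.abs_inner_le_dualNorm hNrm hc.le hcl _ _
      rw [real_inner_comm] at h1
      exact le_trans h1 (mul_le_mul_of_nonneg_right (hB n) hgnn)
    set h : ℝ → ℝ := fun s => ∑ n, ℓ n * Real.exp (-(s * cf n)) with hhdef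
    have hh0 : h 0 = Lt := by simp [hhdef, hℓ, hLt, expLoss]
    have hhη : h (η t) = expLoss x (w (t + 1)) := by
      rw [hupd t]
      simp only [hhdef, hℓ, hcf, expLoss]
      refine Finset.sum_congr rfl fun n _ => ?_
      rw [inner_add_left, real_inner_smul_left, neg_add, Real.exp_add]
    have hdect : h (η t) < Lt := by
      rw [hhη, hLt]
      exact hdec (Nat.lt_succ_self t)
    have hconv : ConvexOn ℝ Set.univ h := by
      have hterm : ∀ n : Fin N,
          ConvexOn ℝ Set.univ (fun s : ℝ => ℓ n * Real.exp (-(s * cf n))) := by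
        intro n
        have hexp : ConvexOn ℝ Set.univ (fun s : ℝ => Real.exp (-(s * cf n))) := by
          refine ⟨convex_univ, fun p _ q _ a b ha hb hab => ?_⟩
          have h1 := convexOn_exp.2 (Set.mem_univ (-(p * cf n)))
            (Set.mem_univ (-(q * cf n))) ha hb hab
          simp only [smul_eq_mul] at h1 ⊢
          have h2 : -((a * p + b * q) * cf n) = a * -(p * cf n) + b * -(q * cf n) := by ring
          rw [h2]
          exact h1
        simpa [smul_eq_mul] using hexp.smul (hlpos n).le
      have hall : ∀ (s : Finset (Fin N)),
          ConvexOn ℝ Set.univ (fun z : ℝ => ∑ n ∈ s, ℓ n * Real.exp (-(z * cf n))) := by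
        intro s
        induction s using Finset.induction with
        | empty => simpa using convexOn_const (0:ℝ) convex_univ
        | insert _ _ hx ih =>
            simp only [Finset.sum_insert hx]
            exact (hterm _).add ih
      rw [hhdef]
      exact hall Finset.univ
    set D1 : ℝ → ℝ := fun s => ∑ n, ℓ n * (Real.exp (-(s * cf n)) * -cf n) with hD1def
    set D2 : ℝ → ℝ := fun s => ∑ n, ℓ n * (Real.exp (-(s * cf n)) * -cf n * -cf n) with hD2def
    have hderivh : ∀ s : ℝ, HasDerivAt h (D1 s) s := by
      intro s
      rw [hhdef, hD1def]
      apply HasDerivAt.fun_sum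
      intro n _
      have h1 : HasDerivAt (fun z : ℝ => -(z * cf n)) (-cf n) s := by
        simpa using ((hasDerivAt_id s).mul_const (cf n)).fun_neg
      exact (h1.exp).const_mul (ℓ n)
    have hderivD1 : ∀ s : ℝ, HasDerivAt D1 (D2 s) s := by
      intro s
      rw [hD1def, hD2def]
      apply HasDerivAt.fun_sum
      intro n _
      have h1 : HasDerivAt (fun z : ℝ => -(z * cf n)) (-cf n) s := by
        simpa using ((hasDerivAt_id s).mul_const (cf n)).fun_neg
      exact ((h1.exp).mul_const (-cf n)).const_mul (ℓ n)
    have hD10 : D1 0 = -g ^ 2 := by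
      have hsum : ∑ n, ℓ n * cf n = g ^ 2 := by
        simp only [hℓ, hcf]
        rw [hg, ← hdir1 t]
        unfold negGrad
        rw [inner_sum]
        exact Finset.sum_congr rfl fun n _ => (real_inner_smul_right _ _ _).symm
      have h1 : ∀ n : Fin N, ℓ n * (Real.exp (-((0:ℝ) * cf n)) * -cf n) = -(ℓ n * cf n) := by
        intro n
        rw [zero_mul, neg_zero, Real.exp_zero, one_mul, mul_neg]
      rw [hD1def]
      simp only []
      rw [Finset.sum_congr rfl fun n _ => h1 n, Finset.sum_neg_distrib, hsum]
    set K : ℝ := B ^ 2 * g ^ 2 * Lt with hK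
    have hseg : ∀ s ∈ Set.Icc (0:ℝ) (η t), h s ≤ Lt := by
      intro s hs
      have hsmem : s ∈ segment ℝ (0:ℝ) (η t) := by
        rw [segment_eq_Icc hηpos.le]; exact hs
      have h1 := hconv.le_on_segment (Set.mem_univ (0:ℝ)) (Set.mem_univ (η t)) hsmem
      rw [hh0] at h1
      exact le_trans h1 (max_le le_rfl hdect.le)
    have hD2le : ∀ s ∈ Set.Icc (0:ℝ) (η t), D2 s ≤ K := by
      intro s hs
      have hterm : ∀ n : Fin N, ℓ n * (Real.exp (-(s * cf n)) * -cf n * -cf n) ≤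
          B ^ 2 * g ^ 2 * (ℓ n * Real.exp (-(s * cf n))) := by
        intro n
        have h1 : cf n ^ 2 ≤ (B * g) ^ 2 := by
          have h3 := abs_le.1 (hcB n)
          nlinarith [h3.1, h3.2]
        have h2 : 0 < ℓ n * Real.exp (-(s * cf n)) := mul_pos (hlpos n) (Real.exp_pos _)
        nlinarith [mul_le_mul_of_nonneg_left h1 h2.le]
      calc D2 s ≤ ∑ n, B ^ 2 * g ^ 2 * (ℓ n * Real.exp (-(s * cf n))) := by
            rw [hD2def]
            exact Finset.sum_le_sum fun n _ => hterm n
        _ = B ^ 2 * g ^ 2 * h s := by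
            rw [hhdef, Finset.mul_sum]
        _ ≤ B ^ 2 * g ^ 2 * Lt :=
            mul_le_mul_of_nonneg_left (hseg s hs) (by positivity)
        _ = K := hK.symm
    have hderivp : ∀ s : ℝ, HasDerivAt (fun z => D1 z + g ^ 2 - z * K) (D2 s - K) s := by
      intro s
      have h1 := ((hderivD1 s).add_const (g ^ 2)).fun_sub ((hasDerivAt_id s).mul_const K)
      simpa using h1
    have hdiffp : Differentiable ℝ (fun z => D1 z + g ^ 2 - z * K) :=
      fun s => (hderivp s).differentiableAt
    have hple : ∀ s ∈ Set.Icc (0:ℝ) (η t), D1 s + g ^ 2 - s * K ≤ 0 := by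
      have hanti : AntitoneOn (fun z => D1 z + g ^ 2 - z * K) (Set.Icc 0 (η t)) := by
        apply antitoneOn_of_deriv_nonpos (convex_Icc _ _) hdiffp.continuous.continuousOn
          hdiffp.differentiableOn
        intro s hs
        rw [interior_Icc] at hs
        rw [(hderivp s).deriv]
        exact sub_nonpos.2 (hD2le s ⟨hs.1.le, hs.2.le⟩)
      intro s hs
      have h1 := hanti (Set.left_mem_Icc.2 hηpos.le) hs hs.1
      have h2 : D1 0 + g ^ 2 - 0 * K = 0 := by rw [hD10]; ring
      calc D1 s + g ^ 2 - s * K ≤ D1 0 + g ^ 2 - 0 * K := h1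
        _ = 0 := h2
    have hderivq : ∀ s : ℝ,
        HasDerivAt (fun z => h z - Lt + z * g ^ 2 - z ^ 2 * K / 2)
          (D1 s + g ^ 2 - s * K) s := by
      intro s
      have h1 := (((hderivh s).sub_const Lt).fun_add ((hasDerivAt_id s).mul_const (g ^ 2))).fun_sub
        (((hasDerivAt_pow 2 s).mul_const K).div_const 2)
      refine h1.congr_deriv ?_
      simp
      ring
    have hdiffq : Differentiable ℝ (fun z => h z - Lt + z * g ^ 2 - z ^ 2 * K / 2) :=
      fun s => (hderivq s).differentiableAt
    have hqanti : AntitoneOn (fun z => h z - Lt + z * g ^ 2 - z ^ 2 * K / 2)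
        (Set.Icc 0 (η t)) := by
      apply antitoneOn_of_deriv_nonpos (convex_Icc _ _) hdiffq.continuous.continuousOn
        hdiffq.differentiableOn
      intro s hs
      rw [interior_Icc] at hs
      rw [(hderivq s).deriv]
      exact hple s ⟨hs.1.le, hs.2.le⟩
    have hqfinal := hqanti (Set.left_mem_Icc.2 hηpos.le) (Set.right_mem_Icc.2 hηpos.le)
      hηpos.le
    have hcomb : h (η t) - Lt + η t * g ^ 2 - (η t) ^ 2 * K / 2 ≤ 0 := by
      have h2 : h 0 - Lt + 0 * g ^ 2 - (0:ℝ) ^ 2 * K / 2 = 0 := by rw [hh0]; ring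
      calc h (η t) - Lt + η t * g ^ 2 - (η t) ^ 2 * K / 2
          ≤ h 0 - Lt + 0 * g ^ 2 - (0:ℝ) ^ 2 * K / 2 := hqfinal
        _ = 0 := h2
    have hBLpos : 0 < B ^ 2 * Lt := mul_pos (pow_pos hBpos 2) hLtpos
    have hstep : η t * (B ^ 2 * Lt) ≤ 1 := (le_div_iff₀ hBLpos).1 hηle
    rw [hhη] at hcomb
    rw [hK] at hcomb
    have h9 : η t * (B ^ 2 * Lt) * (η t * g ^ 2) ≤ 1 * (η t * g ^ 2) :=
      mul_le_mul_of_nonneg_right hstep (mul_nonneg hηpos.le (sq_nonneg g))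
    nlinarith [hcomb, h9]
  have hnn : ∀ t, 0 ≤ η t * (dualNorm Nrm (-(negGrad x (w t)))) ^ 2 :=
    fun t => mul_nonneg (hη t).1.le (sq_nonneg _)
  have hpart : ∀ T, ∑ t ∈ Finset.range T,
      η t * (dualNorm Nrm (-(negGrad x (w t)))) ^ 2 ≤ 2 * expLoss x (w 0) := by
    intro T
    calc ∑ t ∈ Finset.range T, η t * (dualNorm Nrm (-(negGrad x (w t)))) ^ 2
        ≤ ∑ t ∈ Finset.range T, 2 * (expLoss x (w t) - expLoss x (w (t + 1))) :=
          Finset.sum_le_sum fun t _ => key t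
      _ = 2 * ∑ t ∈ Finset.range T, (expLoss x (w t) - expLoss x (w (t + 1))) := by
          rw [Finset.mul_sum]
      _ = 2 * (expLoss x (w 0) - expLoss x (w T)) := by
          rw [Finset.sum_range_sub' (fun t => expLoss x (w t)) T]
      _ ≤ 2 * expLoss x (w 0) := by nlinarith [hLpos (w T)]
  exact ⟨summable_of_sum_range_le hnn hpart, Real.tsum_le_of_sum_range_le hnn hpart⟩

end
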